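/- Let V be a strict weak order on a finite candidate set C, let A be an axis, and suppose V contains a nonpeak plateau with respect to A or an indifference class of size at least three among non-maximal elements mutually indifferent. If V contains a nonpeak plateau a ⊳ b ⊳ c on A with (a ≻ b and b ∼ c) or (c ≻ b and b ∼ a), then there exists a linear extension of V that contains a v-valley with respect to A, i.e., V is not necessarily single-peaked with respect to A. -/

import Mathlib

def VValley {C : Type*} (A V : C → C → Prop) : Prop :=
  ∃ c1 c2 c3 : C, A c1 c2 ∧ A c2 c3 ∧ V c1 c2 ∧ V c3 c2

def UValley {C : Type*} (A V : C → C → Prop) : Prop :=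
  ∃ a b c d : C, a ≠ b ∧ a ≠ c ∧ a ≠ d ∧ b ≠ c ∧ b ≠ d ∧ c ≠ d ∧
    A a b ∧ A b d ∧ A a c ∧ A c d ∧ V a b ∧ V d c

def Extends {C : Type*} (V T : C → C → Prop) : Prop :=
  ∀ x y, V x y → T x y

/-- `V` is a strict partial order: asymmetric and transitive. -/
def IsSPO {C : Type*} (V : C → C → Prop) : Prop :=
  (∀ x y, V x y → ¬ V y x) ∧ (∀ x y z, V x y → V y z → V x z)

/-- `V` is a strict weak order: a strict partial order with transitive incomparability. -/
def IsSWO {C : Type*} (V : C → C → Prop) : Prop :=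
  IsSPO V ∧ ∀ x y z, (¬ V x y ∧ ¬ V y x) → (¬ V y z ∧ ¬ V z y) → (¬ V x z ∧ ¬ V z x)

/-- `V` possibly single-peaked w.r.t. axis `A`: it extends to a total order with no v-valley. -/
def PossSP {C : Type*} (A V : C → C → Prop) : Prop :=
  ∃ T : C → C → Prop, IsStrictTotalOrder C T ∧ Extends V T ∧ ¬ VValley A T

/-- `V` is single-plateaued w.r.t. `A`: the axis splits into consecutive segments
`X`, `Y`, `Z` where `Y` is exactly the set of maximal elements, `V` strictly increases
along `X`, the elements of `Y` are preferred to everything else, and `V` strictly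
decreases along `Z`. -/
def SinglePlateaued {C : Type*} (A V : C → C → Prop) : Prop :=
  ∃ X Y Z : Set C,
    (∀ c, c ∈ X ∨ c ∈ Y ∨ c ∈ Z) ∧
    Disjoint X Y ∧ Disjoint Y Z ∧ Disjoint X Z ∧
    (∀ x ∈ X, ∀ y ∈ Y, A x y) ∧ (∀ y ∈ Y, ∀ z ∈ Z, A y z) ∧ (∀ x ∈ X, ∀ z ∈ Z, A x z) ∧
    Y = {y | ∀ c, ¬ V c y} ∧
    (∀ x ∈ X, ∀ x' ∈ X, A x x' → V x' x) ∧
    (∀ y ∈ Y, ∀ c ∈ X ∪ Z, V y c) ∧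
    (∀ z ∈ Z, ∀ z' ∈ Z, A z z' → V z z')

/-- A nonpeak plateau w.r.t. `A`: `a ⊳ b ⊳ c` with (`a ≻ b` and `b ∼ c`) or (`c ≻ b` and `b ∼ a`). -/
def NonpeakPlateau {C : Type*} (A V : C → C → Prop) : Prop :=
  ∃ a b c : C, A a b ∧ A b c ∧
    ((V a b ∧ ¬ V b c ∧ ¬ V c b) ∨ (V c b ∧ ¬ V b a ∧ ¬ V a b))

lemma swo_ext {C : Type*} (V L : C → C → Prop) (hV : IsSWO V)
    (hL : IsStrictTotalOrder C L) :
    IsStrictTotalOrder C (fun x y => V x y ∨ (¬ V x y ∧ ¬ V y x ∧ L x y)) := by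
  obtain ⟨⟨hasym, htrans⟩, hinc⟩ := hV
  have hLtri : ∀ x y : C, L x y ∨ x = y ∨ L y x := fun x y => by haveI := hL; exact trichotomous_of (r := L) x y
  have hLirr : ∀ x : C, ¬ L x x := hL.irrefl
  have hLtrans : ∀ x y z : C, L x y → L y z → L x z := fun x y z => hL.trans x y z
  refine { trichotomous := fun x y h1 h2 => ((?_ : ∀ x y : C, (V x y ∨ (¬ V x y ∧ ¬ V y x ∧ L x y)) ∨ x = y ∨ (V y x ∨ (¬ V y x ∧ ¬ V x y ∧ L y x))) x y).elim (fun h => absurd h h1) (fun h => h.elim id (fun h => absurd h h2)), irrefl := ?_, trans := ?_ }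
  · intro x y
    by_cases hxy : V x y
    · exact Or.inl (Or.inl hxy)
    · by_cases hyx : V y x
      · exact Or.inr (Or.inr (Or.inl hyx))
      · rcases hLtri x y with hl | hl | hl
        · exact Or.inl (Or.inr ⟨hxy, hyx, hl⟩)
        · exact Or.inr (Or.inl hl)
        · exact Or.inr (Or.inr (Or.inr ⟨hyx, hxy, hl⟩))
  · intro x
    rintro (h | ⟨_, _, h⟩)
    · exact hasym x x h h
    · exact hLirr x h
  · intro x y z hxy hyz
    rcases hxy with hxy | ⟨hnxy, hnyx, hlxy⟩
    · rcases hyz with hyz | ⟨hnyz, hnzy, hlyz⟩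
      · exact Or.inl (htrans _ _ _ hxy hyz)
      · -- V x y and y ∼ z, show V x z
        left
        by_contra hnxz
        by_cases hzx : V z x
        · exact hnzy (htrans _ _ _ hzx hxy)
        · exact (hinc x z y ⟨hnxz, hzx⟩ ⟨hnzy, hnyz⟩).1 hxy
    · rcases hyz with hyz | ⟨hnyz, hnzy, hlyz⟩
      · left
        by_contra hnxz
        by_cases hzx : V z x
        · exact hnyx (htrans _ _ _ hyz hzx)
        · exact (hinc y x z ⟨hnyx, hnxy⟩ ⟨hnxz, hzx⟩).1 hyz
      · have h1 := hinc x y z ⟨hnxy, hnyx⟩ ⟨hnyz, hnzy⟩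
        exact Or.inr ⟨h1.1, h1.2, hLtrans _ _ _ hlxy hlyz⟩

theorem stmt15 {C : Type*} [Fintype C] (A V : C → C → Prop)
    (hA : IsStrictTotalOrder C A) (hV : IsSWO V)
    (hnp : NonpeakPlateau A V) :
    ∃ T : C → C → Prop, IsStrictTotalOrder C T ∧ Extends V T ∧ VValley A T := by
  obtain ⟨a, b, c, hab, hbc, hcase⟩ := hnp
  -- We need a tie-breaking strict total order L with L u b for a specific u ≠ b.
  have key : ∀ u : C, u ≠ b → ∃ L : C → C → Prop, IsStrictTotalOrder C L ∧ L u b := by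
    intro u hu
    let W := WellOrderingRel (α := C)
    have hW : IsStrictTotalOrder C W := by
      have := (WellOrderingRel.isWellOrder (α := C))
      exact { trichotomous := this.trichotomous, irrefl := fun x => irrefl_of W x, trans := fun a b c => @IsTrans.trans C W _ a b c }
    rcases (by haveI := hW; exact trichotomous_of (r := W) u b : W u b ∨ u = b ∨ W b u) with h | h | h
    · exact ⟨W, hW, h⟩
    · exact absurd h hu
    · refine ⟨fun x y => W y x, { trichotomous := ?_, irrefl := ?_, trans := ?_ }, h⟩
      · intro x y h1 h2
        rcases (by haveI := hW; exact trichotomous_of (r := W) x y : W x y ∨ x = y ∨ W y x) with h' | h' | h'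
        · exact absurd h' h2
        · exact h'
        · exact absurd h' h1
      · exact fun x => hW.irrefl x
      · exact fun x y z hxy hyz => hW.trans _ _ _ hyz hxy
  rcases hcase with ⟨hVab, hnbc, hncb⟩ | ⟨hVcb, hnba, hnab⟩
  · -- a ≻ b, b ∼ c : break tie with c before b
    have hcb : c ≠ b := by
      rintro rfl; exact hA.irrefl c hbc
    obtain ⟨L, hL, hLcb⟩ := key c hcb
    refine ⟨fun x y => V x y ∨ (¬ V x y ∧ ¬ V y x ∧ L x y), swo_ext V L hV hL,
      fun x y h => Or.inl h, a, b, c, hab, hbc, Or.inl hVab, Or.inr ⟨hncb, hnbc, hLcb⟩⟩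
  · -- c ≻ b, b ∼ a : break tie with a before b
    have hab' : a ≠ b := by
      rintro rfl; exact hA.irrefl a hab
    obtain ⟨L, hL, hLab⟩ := key a hab'
    refine ⟨fun x y => V x y ∨ (¬ V x y ∧ ¬ V y x ∧ L x y), swo_ext V L hV hL,
      fun x y h => Or.inl h, a, b, c, hab, hbc, Or.inr ⟨hnab, hnba, hLab⟩, Or.inl hVcb⟩
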